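/- (Goldman–Margulis length formula: the Margulis invariant is the derivative of hyperbolic translation length.) Let g ∈ SL(2,ℝ) with tr(g) > 2, and let ℓ(g) ≥ 0 be its hyperbolic translation length, determined by cosh(ℓ(g)/2) = tr(g)/2 (i.e. ℓ(g) = 2 arccosh(tr(g)/2)). Let u be a traceless 2×2 real matrix. Then the function t ↦ ℓ(exp(t u) · g) (defined for t near 0, where exp is the matrix exponential) is differentiable at t = 0 with derivative equal to tr(u · (g − g⁻¹)) / (2 sinh(ℓ(g)/2)). -/

import Mathlib

noncomputable section

open Matrix

attribute [local instance] Matrix.linftyOpNormedRing Matrix.linftyOpNormedAlgebra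
  Matrix.linftyOpNormedSpace

/-- arcosh -/
def myAcosh (y : ℝ) : ℝ := Real.log (y + Real.sqrt (y ^ 2 - 1))

lemma myAcosh_nonneg {y : ℝ} (hy : 1 ≤ y) : 0 ≤ myAcosh y := by
  apply Real.log_nonneg
  have := Real.sqrt_nonneg (y ^ 2 - 1)
  linarith

lemma cosh_myAcosh {y : ℝ} (hy : 1 ≤ y) : Real.cosh (myAcosh y) = y := by
  have hs : Real.sqrt (y ^ 2 - 1) ^ 2 = y ^ 2 - 1 := Real.sq_sqrt (by nlinarith)
  have hE : (0:ℝ) < y + Real.sqrt (y ^ 2 - 1) := by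
    have := Real.sqrt_nonneg (y ^ 2 - 1); linarith
  rw [Real.cosh_eq, myAcosh, Real.exp_log hE, Real.exp_neg, Real.exp_log hE]
  have h2 : (y + Real.sqrt (y ^ 2 - 1))⁻¹ = y - Real.sqrt (y ^ 2 - 1) := by
    field_simp
    nlinarith
  rw [h2]; ring

lemma cosh_inj_nonneg {a b : ℝ} (ha : 0 ≤ a) (hb : 0 ≤ b) (h : Real.cosh a = Real.cosh b) :
    a = b :=
  Real.cosh_strictMonoOn.injOn (Set.mem_Ici.2 ha) (Set.mem_Ici.2 hb) h

/-- (Goldman–Margulis.) The Margulis invariant is the derivative of the hyperbolic translation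
length: if `g ∈ SL(2,ℝ)` has `tr g > 2`, `u` is traceless, and `ℓ` is the translation-length
function (characterized on hyperbolic elements by `cosh(ℓ(m)/2) = tr(m)/2` and `ℓ(m) ≥ 0`),
then `t ↦ ℓ(exp(t u) g)` is differentiable at `0` with derivative
`tr(u (g − g⁻¹)) / (2 sinh(ℓ(g)/2))`. -/
theorem goldman_margulis_length_derivative
    (g : Matrix (Fin 2) (Fin 2) ℝ) (hdet : g.det = 1) (htr : 2 < g.trace)
    (u : Matrix (Fin 2) (Fin 2) ℝ) (hu : u.trace = 0)
    (ℓ : Matrix (Fin 2) (Fin 2) ℝ → ℝ)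
    (hℓ : ∀ m : Matrix (Fin 2) (Fin 2) ℝ, 2 < m.trace →
      Real.cosh (ℓ m / 2) = m.trace / 2 ∧ 0 ≤ ℓ m) :
    HasDerivAt (fun t : ℝ => ℓ (NormedSpace.exp (t • u) * g))
      ((u * (g - g⁻¹)).trace / (2 * Real.sinh (ℓ g / 2))) 0 := by
  -- uniqueness of ℓ on hyperbolic elements
  have huniq : ∀ m : Matrix (Fin 2) (Fin 2) ℝ, 2 < m.trace →
      ℓ m = 2 * myAcosh (m.trace / 2) := by
    intro m hm
    obtain ⟨h1, h2⟩ := hℓ m hm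
    have hy : (1:ℝ) ≤ m.trace / 2 := by linarith
    have := cosh_inj_nonneg (by linarith) (myAcosh_nonneg hy)
      (h1.trans (cosh_myAcosh hy).symm)
    linarith
  -- derivative of the trace function
  set f : ℝ → ℝ := fun t => ((NormedSpace.exp (t • u)) * g).trace with hf_def
  have hexp : HasDerivAt (fun t : ℝ => NormedSpace.exp (t • u)) u 0 := by
    have := hasDerivAt_exp_smul_const (𝕂 := ℝ) u (0 : ℝ)
    simp at this; exact this
  have hmul : HasDerivAt (fun t : ℝ => (NormedSpace.exp (t • u)) * g) (u * g) 0 :=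
    hexp.mul_const g
  have hT : HasDerivAt f (u * g).trace 0 := by
    have hc : Continuous (Matrix.trace : Matrix (Fin 2) (Fin 2) ℝ → ℝ) := by
      exact LinearMap.continuous_of_finiteDimensional (Matrix.traceLinearMap (Fin 2) ℝ ℝ)
    have := ((Matrix.traceLinearMap (Fin 2) ℝ ℝ).toContinuousLinearMap).hasFDerivAt.comp_hasDerivAt
      (0:ℝ) hmul
    simp at this; exact this
  have hf0 : f 0 = g.trace := by simp [hf_def]
  set c : ℝ := (u * g).trace with hc_def
  set y0 : ℝ := g.trace / 2 with hy0_def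
  have hy0 : 1 < y0 := by rw [hy0_def]; linarith
  set s : ℝ := Real.sqrt (y0 ^ 2 - 1) with hs_def
  have hs2 : s ^ 2 = y0 ^ 2 - 1 := Real.sq_sqrt (by nlinarith)
  have hspos : 0 < s := Real.sqrt_pos.2 (by nlinarith)
  -- sinh formula
  have hsinh : Real.sinh (ℓ g / 2) = s := by
    obtain ⟨h1, h2⟩ := hℓ g htr
    have hsq : Real.sinh (ℓ g / 2) ^ 2 = y0 ^ 2 - 1 := by
      have := Real.cosh_sq (ℓ g / 2)
      rw [h1] at this
      rw [hy0_def]; linarith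
    have hnn : 0 ≤ Real.sinh (ℓ g / 2) := Real.sinh_nonneg_iff.2 (by linarith)
    rw [hs_def, ← hsq, Real.sqrt_sq hnn]
  -- chain rule for the explicit formula
  have h2 : HasDerivAt (fun t => f t / 2) (c / 2) 0 := hT.div_const 2
  have h3 : HasDerivAt (fun t => (f t / 2) ^ 2 - 1) (2 * (y0 ^ 1) * (c / 2)) 0 := by
    have := (h2.pow 2).sub_const 1
    simpa [hf0] using this
  have h4 : HasDerivAt (fun t => Real.sqrt ((f t / 2) ^ 2 - 1))
      ((2 * (y0 ^ 1) * (c / 2)) / (2 * s)) 0 := by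
    have := h3.sqrt (by simp [hf0, ← hy0_def]; nlinarith)
    simpa [hf0, ← hy0_def, ← hs_def] using this
  have h5 := h2.add h4
  have h6 : HasDerivAt (fun t => Real.log (f t / 2 + Real.sqrt ((f t / 2) ^ 2 - 1)))
      ((c / 2 + (2 * (y0 ^ 1) * (c / 2)) / (2 * s)) / (y0 + s)) 0 := by
    have := h5.log (by simp [hf0, ← hy0_def, ← hs_def]; nlinarith)
    simpa [hf0, ← hy0_def, ← hs_def] using this
  have h7 := h6.const_mul 2
  -- eventual equality
  have hcont : ContinuousAt f 0 := hT.continuousAt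
  have hev : (fun t : ℝ => ℓ (NormedSpace.exp (t • u) * g)) =ᶠ[nhds 0]
      (fun t => 2 * Real.log (f t / 2 + Real.sqrt ((f t / 2) ^ 2 - 1))) := by
    have hopen : ∀ᶠ t : ℝ in nhds 0, 2 < f t := by
      have : Set.Ioi (2:ℝ) ∈ nhds (f 0) := by
        rw [hf0]; exact Ioi_mem_nhds htr
      exact hcont this
    filter_upwards [hopen] with t ht
    rw [huniq _ ht, myAcosh]
  -- Cayley–Hamilton: trace identity
  have htrid : (u * (g - g⁻¹)).trace = 2 * c := by
    have hinv : g⁻¹ = g.adjugate := by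
      rw [Matrix.inv_def, hdet]; simp
    rw [hinv, Matrix.adjugate_fin_two]
    have hu' : u 1 1 = - u 0 0 := by
      have := Matrix.trace_fin_two u; rw [hu] at this; linarith
    rw [hc_def]
    simp [Matrix.trace_fin_two, Matrix.mul_apply, Fin.sum_univ_two, Matrix.sub_apply, hu']
    ring
  -- conclude
  have hval : (u * (g - g⁻¹)).trace / (2 * Real.sinh (ℓ g / 2)) =
      2 * ((c / 2 + (2 * (y0 ^ 1) * (c / 2)) / (2 * s)) / (y0 + s)) := by
    rw [htrid, hsinh]
    have hys : 0 < y0 + s := by linarith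
    field_simp
    nlinarith [hs2]
  rw [hval]
  exact h7.congr_of_eventuallyEq hev
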